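/- For every n ≥ 2 there exist a concurrent epistemic game structure M, a coalition A with |A| = n, a set of states P ⊆ St, and a state q such that q belongs to the least fixpoint of the monotone operator X ↦ E_A P ∪ ⟨A⟩X, yet M,q ⊭ ⟨⟨A⟩⟩◇P. (For coalitions of size greater than one, the fixpoint μZ.(E_A φ ∨ ⟨A⟩Z) is not a lower bound for ⟨⟨A⟩⟩◇φ.) -/

import Mathlib

/-- A concurrent epistemic game structure (iCGS). -/
structure CEGS where
  Agt : Type
  St : Type
  AP : Type
  Act : Type
  agtFin : Finite Agt
  agtNe : Nonempty Agt
  stNe : Nonempty St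
  actFin : Finite Act
  actNe : Nonempty Act
  V : AP → Set St
  d : Agt → St → Set Act
  d_ne : ∀ a q, (d a q).Nonempty
  o : St → (Agt → Act) → St
  sim : Agt → St → St → Prop
  sim_equiv : ∀ a, Equivalence (sim a)
  uniform : ∀ a q q', sim a q q' → d a q = d a q'

namespace CEGS

variable (M : CEGS)

/-- An action profile available at state `q`. -/
def Avail (q : M.St) (α : M.Agt → M.Act) : Prop := ∀ a, α a ∈ M.d a q

/-- A path: an infinite sequence of states, each next state being the outcome of
some available action profile. -/
def IsPath (lam : ℕ → M.St) : Prop :=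
  ∀ i, ∃ α, M.Avail (lam i) α ∧ lam (i + 1) = M.o (lam i) α

/-- `s` is a collective ir-strategy (uniform, memoryless) for coalition `A`. -/
def IsIrStrat (A : Set M.Agt) (s : M.Agt → M.St → M.Act) : Prop :=
  ∀ a ∈ A, (∀ q, s a q ∈ M.d a q) ∧ (∀ q q', M.sim a q q' → s a q = s a q')

/-- `s` is a collective Ir-strategy (perfect information, memoryless) for coalition `A`. -/
def IsIrStratPI (A : Set M.Agt) (s : M.Agt → M.St → M.Act) : Prop :=
  ∀ a ∈ A, ∀ q, s a q ∈ M.d a q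

/-- `lam ∈ out(q, s_A)`: a path starting at `q` along which every agent of `A` plays `s`. -/
def InOut (A : Set M.Agt) (s : M.Agt → M.St → M.Act) (q : M.St) (lam : ℕ → M.St) : Prop :=
  lam 0 = q ∧ ∀ i, ∃ α, M.Avail (lam i) α ∧ (∀ a ∈ A, α a = s a (lam i)) ∧
    lam (i + 1) = M.o (lam i) α

/-- `lam ∈ out^ir(q, s_A) = ⋃_{a∈A} ⋃_{q ∼_a q'} out(q', s_A)`. -/
def InOutIr (A : Set M.Agt) (s : M.Agt → M.St → M.Act) (q : M.St) (lam : ℕ → M.St) : Prop :=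
  ∃ a ∈ A, ∃ q', M.sim a q q' ∧ M.InOut A s q' lam

/-- The "everybody knows" relation `∼_A^E = ⋃_{a∈A} ∼_a`. -/
def simE (A : Set M.Agt) (q q' : M.St) : Prop := ∃ a ∈ A, M.sim a q q'

/-- The "common knowledge" relation `∼_A^C`: transitive closure of `∼_A^E`. -/
def simC (A : Set M.Agt) : M.St → M.St → Prop := Relation.TransGen (M.simE A)

/-- Individual knowledge: `K_a X`. -/
def Know (a : M.Agt) (X : Set M.St) : Set M.St := {q | ∀ q', M.sim a q q' → q' ∈ X}

/-- Mutual knowledge: `E_A X`. -/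
def EKnow (A : Set M.Agt) (X : Set M.St) : Set M.St := {q | ∀ q', M.simE A q q' → q' ∈ X}

/-- Common knowledge: `C_A X`. -/
def CKnow (A : Set M.Agt) (X : Set M.St) : Set M.St := {q | ∀ q', M.simC A q q' → q' ∈ X}

/-- Next-step operator `⟨A⟩X` (imperfect information). -/
def Next (A : Set M.Agt) (X : Set M.St) : Set M.St :=
  {q | ∃ s, M.IsIrStrat A s ∧ ∀ lam, M.InOutIr A s q lam → lam 1 ∈ X}

/-- `Reach_M(s_A, Q, X)`. -/
def ReachSet (A : Set M.Agt) (s : M.Agt → M.St → M.Act) (Q X : Set M.St) : Set M.St :=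
  {q | q ∈ Q ∧ ∀ lam, M.InOut A s q lam → ∃ i, lam i ∈ X ∧ ∀ j < i, lam j ∈ Q}

/-- Steadfast next-step operator `⟨A⟩•X`. -/
def NextStead (A : Set M.Agt) (X : Set M.St) : Set M.St :=
  {q | ∃ s, M.IsIrStrat A s ∧
    M.ReachSet A s {q' | M.simC A q q'} X = {q' | M.simC A q q'}}

/-- `M,q ⊨ ⟨⟨A⟩⟩◇P` (ATLir reachability, ir-strategies). -/
def CanReach (A : Set M.Agt) (P : Set M.St) (q : M.St) : Prop :=
  ∃ s, M.IsIrStrat A s ∧ ∀ lam, M.InOutIr A s q lam → ∃ i, lam i ∈ P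

/-- `M,q ⊨ ⟨⟨A⟩⟩□P` (ATLir safety, ir-strategies). -/
def CanGlobally (A : Set M.Agt) (P : Set M.St) (q : M.St) : Prop :=
  ∃ s, M.IsIrStrat A s ∧ ∀ lam, M.InOutIr A s q lam → ∀ i, lam i ∈ P

/-- `M,q ⊨ ⟨⟨A⟩⟩ S U P` (ATLir until, ir-strategies). -/
def CanUntil (A : Set M.Agt) (S P : Set M.St) (q : M.St) : Prop :=
  ∃ s, M.IsIrStrat A s ∧ ∀ lam, M.InOutIr A s q lam →
    ∃ i, lam i ∈ P ∧ ∀ j < i, lam j ∈ S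

/-- Perfect-information next-step operator `N^Ir_A(X)`. -/
def NextPI (A : Set M.Agt) (X : Set M.St) : Set M.St :=
  {q | ∃ t, M.IsIrStratPI A t ∧ ∀ lam, M.InOut A t q lam → lam 1 ∈ X}

/-- Perfect-information "globally" operator `G^Ir_A(X)`. -/
def GloballyPI (A : Set M.Agt) (X : Set M.St) : Set M.St :=
  {q | ∃ t, M.IsIrStratPI A t ∧ ∀ lam, M.InOut A t q lam → ∀ i, lam i ∈ X}

/-- Perfect-information "until" operator `U^Ir_A(Y, X)`. -/
def UntilPI (A : Set M.Agt) (Y X : Set M.St) : Set M.St :=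
  {q | ∃ t, M.IsIrStratPI A t ∧ ∀ lam, M.InOut A t q lam →
    ∃ i, lam i ∈ X ∧ ∀ j < i, lam j ∈ Y}

end CEGS

/-- Knaster–Tarski least fixpoint of a set operator. -/
def lfpSet {σ : Type} (f : Set σ → Set σ) : Set σ := sInf {X | f X ⊆ X}

/-- Knaster–Tarski greatest fixpoint of a set operator. -/
def gfpSet {σ : Type} (f : Set σ → Set σ) : Set σ := sSup {X | X ⊆ f X}


namespace BigCoalitionCE

/-- Class map for agent 1: states 1,2 are indistinguishable. -/
def c1 : Fin 4 → ℕ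
  | ⟨0,_⟩ => 0 | ⟨1,_⟩ => 1 | ⟨2,_⟩ => 1 | ⟨_+3,_⟩ => 3

/-- Class map for agent 2: states 0,1 are indistinguishable. -/
def c2 : Fin 4 → ℕ
  | ⟨0,_⟩ => 0 | ⟨1,_⟩ => 0 | ⟨2,_⟩ => 2 | ⟨_+3,_⟩ => 3

/-- Transition table (depends only on agents 1 and 2's actions). -/
def tr : Fin 4 → Bool → Bool → Fin 4
  | ⟨0,_⟩, false, _ => 0
  | ⟨0,_⟩, true, false => 1
  | ⟨0,_⟩, true, true => 3
  | ⟨1,_⟩, false, false => 0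
  | ⟨1,_⟩, false, true => 3
  | ⟨1,_⟩, true, false => 0
  | ⟨1,_⟩, true, true => 1
  | ⟨2,_⟩, false, _ => 2
  | ⟨2,_⟩, true, false => 1
  | ⟨2,_⟩, true, true => 0
  | ⟨_+3,_⟩, _, _ => 3

def a0 (n : ℕ) (hn : 2 ≤ n) : Fin n := ⟨0, by omega⟩
def a1 (n : ℕ) (hn : 2 ≤ n) : Fin n := ⟨1, by omega⟩

lemma a01 (n : ℕ) (hn : 2 ≤ n) : a0 n hn ≠ a1 n hn := by
  simp [a0, a1, Fin.ext_iff]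

/-- Observation map: agent `0` is "agent 1", agent `1` is "agent 2", the remaining
agents are dummies with identity observation. -/
def caux (n : ℕ) (hn : 2 ≤ n) (a : Fin n) (q : Fin 4) : ℕ :=
  if a = a0 n hn then c1 q else if a = a1 n hn then c2 q else q.val

lemma caux_a0 (n : ℕ) (hn : 2 ≤ n) (q : Fin 4) : caux n hn (a0 n hn) q = c1 q := by
  simp [caux]

lemma caux_a1 (n : ℕ) (hn : 2 ≤ n) (q : Fin 4) : caux n hn (a1 n hn) q = c2 q := by
  simp [caux, Ne.symm (a01 n hn)]

lemma caux_other (n : ℕ) (hn : 2 ≤ n) {a : Fin n} (q : Fin 4)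
    (h0 : a ≠ a0 n hn) (h1 : a ≠ a1 n hn) : caux n hn a q = q.val := by
  simp [caux, h0, h1]

def Mdl (n : ℕ) (hn : 2 ≤ n) : CEGS where
  Agt := Fin n
  St := Fin 4
  AP := Empty
  Act := Bool
  agtFin := inferInstance
  agtNe := ⟨a0 n hn⟩
  stNe := ⟨0⟩
  actFin := inferInstance
  actNe := ⟨true⟩
  V := fun _ => ∅
  d := fun _ _ => Set.univ
  d_ne := fun _ _ => ⟨true, trivial⟩
  o := fun q α => tr q (α (a0 n hn)) (α (a1 n hn))
  sim := fun a q q' => caux n hn a q = caux n hn a q'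
  sim_equiv := fun _ => ⟨fun _ => rfl, Eq.symm, Eq.trans⟩
  uniform := fun _ _ _ _ => rfl

lemma sim_of (n : ℕ) (hn : 2 ≤ n) (a : Fin n) (q q' : Fin 4)
    (h : caux n hn a q = caux n hn a q') : (Mdl n hn).sim a q q' := h

lemma sim_cases (n : ℕ) (hn : 2 ≤ n) {a : Fin n} {q q' : Fin 4}
    (h : (Mdl n hn).sim a q q') : c1 q = c1 q' ∨ c2 q = c2 q' ∨ q = q' := by
  have h' : caux n hn a q = caux n hn a q' := h
  by_cases h0 : a = a0 n hn
  · subst h0; rw [caux_a0, caux_a0] at h'; exact Or.inl h'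
  · by_cases h1 : a = a1 n hn
    · subst h1; rw [caux_a1, caux_a1] at h'; exact Or.inr (Or.inl h')
    · rw [caux_other n hn q h0 h1, caux_other n hn q' h0 h1] at h'
      exact Or.inr (Or.inr (Fin.ext h'))

/-- Uniform strategy built from class-level action choices. -/
def strat (n : ℕ) (hn : 2 ≤ n) (g1 g2 : ℕ → Bool) (a : Fin n) (q : Fin 4) : Bool :=
  if a = a0 n hn then g1 (c1 q) else if a = a1 n hn then g2 (c2 q) else true

lemma strat_a0 (n : ℕ) (hn : 2 ≤ n) (g1 g2 : ℕ → Bool) (q : Fin 4) :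
    strat n hn g1 g2 (a0 n hn) q = g1 (c1 q) := by simp [strat]

lemma strat_a1 (n : ℕ) (hn : 2 ≤ n) (g1 g2 : ℕ → Bool) (q : Fin 4) :
    strat n hn g1 g2 (a1 n hn) q = g2 (c2 q) := by
  simp [strat, Ne.symm (a01 n hn)]

lemma strat_is (n : ℕ) (hn : 2 ≤ n) (g1 g2 : ℕ → Bool) :
    (Mdl n hn).IsIrStrat Set.univ (strat n hn g1 g2) := by
  intro a _
  refine ⟨fun q => trivial, fun q q' h => ?_⟩
  have h' : caux n hn a q = caux n hn a q' := h
  by_cases h0 : a = a0 n hn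
  · subst h0
    rw [caux_a0 n hn q, caux_a0 n hn q'] at h'
    rw [strat_a0 n hn g1 g2 q, strat_a0 n hn g1 g2 q', h']
  · by_cases h1 : a = a1 n hn
    · subst h1
      rw [caux_a1 n hn q, caux_a1 n hn q'] at h'
      rw [strat_a1 n hn g1 g2 q, strat_a1 n hn g1 g2 q', h']
    · have h0' : ¬ (a : Fin n) = a0 n hn := h0
      have h1' : ¬ (a : Fin n) = a1 n hn := h1
      unfold strat
      split_ifs with H0 H1
      · exact absurd H0 h0'
      · exact absurd H1 h1'
      · rfl

/-- Generic membership lemma for the `Next` operator with a class-based strategy. -/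
lemma mem_next (n : ℕ) (hn : 2 ≤ n) (X : Set (Fin 4)) (g1 g2 : ℕ → Bool) (q : Fin 4)
    (h : ∀ q' : Fin 4, (c1 q = c1 q' ∨ c2 q = c2 q' ∨ q = q') →
      tr q' (g1 (c1 q')) (g2 (c2 q')) ∈ X) :
    q ∈ (Mdl n hn).Next Set.univ X := by
  refine ⟨strat n hn g1 g2, strat_is n hn g1 g2, ?_⟩
  rintro lam ⟨a, -, q', hsim, hlam0, hstep⟩
  obtain ⟨α, hav, hag, h1⟩ := hstep 0
  have e0 : α (a0 n hn) = g1 (c1 (lam 0)) := by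
    rw [hag (a0 n hn) (Set.mem_univ _), strat_a0 n hn g1 g2 (lam 0)]
  have e1 : α (a1 n hn) = g2 (c2 (lam 0)) := by
    rw [hag (a1 n hn) (Set.mem_univ _), strat_a1 n hn g1 g2 (lam 0)]
  have hout : lam 1 = tr (lam 0) (g1 (c1 (lam 0))) (g2 (c2 (lam 0))) := by
    rw [h1, ← e0, ← e1]; rfl
  rw [hout, hlam0]
  exact h q' (sim_cases n hn hsim)

/-- The deterministic run of a strategy is in `out(lam 0, s)`. -/
lemma inout_of_run (n : ℕ) (hn : 2 ≤ n) (s : (Mdl n hn).Agt → (Mdl n hn).St → (Mdl n hn).Act)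
    (lam : ℕ → Fin 4)
    (hstep : ∀ i, lam (i+1) = tr (lam i) (s (a0 n hn) (lam i)) (s (a1 n hn) (lam i))) :
    (Mdl n hn).InOut Set.univ s (lam 0) lam :=
  ⟨rfl, fun i => ⟨fun a => s a (lam i), fun _ => trivial, fun _ _ => rfl, hstep i⟩⟩

instance (n : ℕ) (hn : 2 ≤ n) (k : ℕ) : OfNat (Mdl n hn).St k :=
  inferInstanceAs (OfNat (Fin 4) k)

theorem main (n : ℕ) (hn : 2 ≤ n) :
    ∃ (M : CEGS) (A : Set M.Agt) (P : Set M.St) (q : M.St),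
      A.ncard = n ∧
      q ∈ lfpSet (fun X => M.EKnow A P ∪ M.Next A X) ∧
      ¬ M.CanReach A P q := by
  refine ⟨Mdl n hn, Set.univ, {(3 : Fin 4)}, (1 : Fin 4), ?_, ?_, ?_⟩
  · -- coalition size
    have : (Set.univ : Set (Fin n)).ncard = n := by
      simp [Set.ncard_univ]
    exact this
  · -- fixpoint membership
    have key : ∀ X : Set (Fin 4),
        ((Mdl n hn).EKnow Set.univ {(3 : Fin 4)} ∪ (Mdl n hn).Next Set.univ X) ⊆ X →
        (1 : Fin 4) ∈ X := by
      intro X hX'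
      -- state 3 is in E_A P
      have h3 : (3 : Fin 4) ∈ X := by
        apply hX'
        left
        rintro q' ⟨a, -, hsim⟩
        rcases sim_cases n hn hsim with h | h | h
        · have : ∀ q' : Fin 4, c1 3 = c1 q' → q' = 3 := by decide
          exact this q' h
        · have : ∀ q' : Fin 4, c2 3 = c2 q' → q' = 3 := by decide
          exact this q' h
        · exact h.symm
      -- state 0 is in Next X (strategy g1 = (== 0), g2 = (== 0)): outcome is always 3
      have h0 : (0 : Fin 4) ∈ X := by
        apply hX'
        right
        apply mem_next n hn X (fun k => k == 0) (fun k => k == 0) 0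
        intro q' hq'
        have hc : ∀ q' : Fin 4, (c1 0 = c1 q' ∨ c2 0 = c2 q' ∨ (0 : Fin 4) = q') →
            tr q' ((c1 q') == 0) ((c2 q') == 0) = 3 := by decide
        rw [hc q' hq']; exact h3
      -- state 1 is in Next X (strategy g1 = (== 1), g2 = (== 2)): outcome is always 0
      apply hX'
      right
      apply mem_next n hn X (fun k => k == 1) (fun k => k == 2) 1
      intro q' hq'
      have hc : ∀ q' : Fin 4, (c1 1 = c1 q' ∨ c2 1 = c2 q' ∨ (1 : Fin 4) = q') →
          tr q' ((c1 q') == 1) ((c2 q') == 2) = 0 := by decide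
      rw [hc q' hq']; exact h0
    intro X hX
    exact key X hX
  · -- CanReach fails at state 1
    rintro ⟨s, hs, hall⟩
    -- uniformity consequences
    have hu0 : s (a0 n hn) 1 = s (a0 n hn) 2 :=
      (hs (a0 n hn) (Set.mem_univ _)).2 1 2
        (sim_of n hn _ 1 2 (by rw [caux_a0, caux_a0]; decide))
    have hu1 : s (a1 n hn) 0 = s (a1 n hn) 1 :=
      (hs (a1 n hn) (Set.mem_univ _)).2 0 1
        (sim_of n hn _ 0 1 (by rw [caux_a1, caux_a1]; decide))
    -- epistemic neighbours of state 1
    have sim10 : (Mdl n hn).sim (a1 n hn) 1 0 :=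
      sim_of n hn _ 1 0 (by rw [caux_a1, caux_a1]; decide)
    have sim11 : (Mdl n hn).sim (a1 n hn) 1 1 := rfl
    have sim12 : (Mdl n hn).sim (a0 n hn) 1 2 :=
      sim_of n hn _ 1 2 (by rw [caux_a0, caux_a0]; decide)
    have ne13 : ((1 : Fin 4) = 3) → False := by decide
    have ne03 : ((0 : Fin 4) = 3) → False := by decide
    have ne23 : ((2 : Fin 4) = 3) → False := by decide
    by_cases hA : s (a0 n hn) 0 = true
    · by_cases hC : s (a1 n hn) 0 = true
      · by_cases hB : s (a0 n hn) 1 = true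
        · -- run: constantly 1
          have hC1 : s (a1 n hn) 1 = true := hu1 ▸ hC
          have hrun : (Mdl n hn).InOut Set.univ s ((fun _ => (1 : Fin 4)) 0) (fun _ => 1) := by
            refine inout_of_run n hn s (fun _ => 1) ?_
            intro i
            show (1 : Fin 4) = tr 1 (s (a0 n hn) 1) (s (a1 n hn) 1)
            rw [hB, hC1]
            decide
          obtain ⟨i, hi⟩ := hall (fun _ => 1) ⟨a1 n hn, Set.mem_univ _, 1, sim11, hrun⟩
          exact ne13 hi
        · -- run: constantly 2
          have hB' : s (a0 n hn) 1 = false := Bool.eq_false_iff.mpr hB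
          have hB2 : s (a0 n hn) 2 = false := hu0 ▸ hB'
          have hrun : (Mdl n hn).InOut Set.univ s ((fun _ => (2 : Fin 4)) 0) (fun _ => 2) := by
            refine inout_of_run n hn s (fun _ => 2) ?_
            intro i
            show (2 : Fin 4) = tr 2 (s (a0 n hn) 2) (s (a1 n hn) 2)
            rw [hB2]
            cases s (a1 n hn) 2 <;> decide
          obtain ⟨i, hi⟩ := hall (fun _ => 2) ⟨a0 n hn, Set.mem_univ _, 2, sim12, hrun⟩
          exact ne23 hi
      · -- run: 0,1,0,1,...
        have hC' : s (a1 n hn) 0 = false := Bool.eq_false_iff.mpr hC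
        have hC1 : s (a1 n hn) 1 = false := hu1 ▸ hC'
        have hrun : (Mdl n hn).InOut Set.univ s
            ((fun i => if i % 2 = 0 then (0 : Fin 4) else 1) 0)
            (fun i => if i % 2 = 0 then (0 : Fin 4) else 1) := by
          refine inout_of_run n hn s (fun i => if i % 2 = 0 then (0 : Fin 4) else 1) ?_
          intro i
          rcases Nat.even_or_odd i with he | ho
          · have e1 : i % 2 = 0 := Nat.even_iff.mp he
            have e2 : (i+1) % 2 = 1 := by omega
            simp only [e1, e2, if_pos rfl]
            norm_num
            show (1 : Fin 4) = tr 0 (s (a0 n hn) 0) (s (a1 n hn) 0)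
            rw [hA, hC']
            decide
          · have e1 : i % 2 = 1 := Nat.odd_iff.mp ho
            have e2 : (i+1) % 2 = 0 := by omega
            simp only [e1, e2, if_pos rfl]
            norm_num
            show (0 : Fin 4) = tr 1 (s (a0 n hn) 1) (s (a1 n hn) 1)
            rw [hC1]
            cases s (a0 n hn) 1 <;> decide
        obtain ⟨i, hi⟩ := hall _ ⟨a1 n hn, Set.mem_univ _, _, sim10, hrun⟩
        rcases Nat.even_or_odd i with he | ho
        · have e1 : i % 2 = 0 := Nat.even_iff.mp he
          have : (if i % 2 = 0 then (0 : Fin 4) else 1) = 3 := hi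
          rw [e1] at this
          exact ne03 this
        · have e1 : i % 2 = 1 := Nat.odd_iff.mp ho
          have : (if i % 2 = 0 then (0 : Fin 4) else 1) = 3 := hi
          rw [e1] at this
          exact ne13 this
    · -- run: constantly 0
      have hA' : s (a0 n hn) 0 = false := Bool.eq_false_iff.mpr hA
      have hrun : (Mdl n hn).InOut Set.univ s ((fun _ => (0 : Fin 4)) 0) (fun _ => 0) := by
        refine inout_of_run n hn s (fun _ => 0) ?_
        intro i
        show (0 : Fin 4) = tr 0 (s (a0 n hn) 0) (s (a1 n hn) 0)
        rw [hA']
        cases s (a1 n hn) 0 <;> decide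
      obtain ⟨i, hi⟩ := hall (fun _ => 0) ⟨a1 n hn, Set.mem_univ _, 0, sim10, hrun⟩
      exact ne03 hi

end BigCoalitionCE

/-- for every coalition size `n ≥ 2`, the fixpoint `μX.(E_A P ∪ ⟨A⟩X)`
is not a lower bound for `⟨⟨A⟩⟩◇P`. -/


theorem big_coalition_fixpoint_not_lower_bound (n : ℕ) (hn : 2 ≤ n) :
    ∃ (M : CEGS) (A : Set M.Agt) (P : Set M.St) (q : M.St),
      A.ncard = n ∧
      q ∈ lfpSet (fun X => M.EKnow A P ∪ M.Next A X) ∧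
      ¬ M.CanReach A P q := by
  exact BigCoalitionCE.main n hn
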